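/- For the parabolic surface singularity T_{3,3,3} (= P₈), i.e., the surface germ (V,0) ⊂ (ℂ³,0) defined by x³ + y³ + z³ = 0, the Poincaré series of the arc filtration is P_{V,0}(t) = (1 − t³) / (1 − t)³, as an identity of formal power series; equivalently dim_ℂ(F_0/F_1) = 1 and dim_ℂ(F_i/F_{i+1}) = 3i for i ≥ 1. -/

import Mathlib

open Filter
open scoped Classical

/-- An arc on the hypersurface `{f = 0} ⊆ ℂ^N`: a germ of an analytic map
`φ : (ℂ,0) → (ℂ^N,0)` with `f ∘ φ ≡ 0` near `0`. -/
structure Arc (N : ℕ) (f : (Fin N → ℂ) → ℂ) where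
  toFun : ℂ → Fin N → ℂ
  analyticAt : AnalyticAt ℂ toFun 0
  map_zero : toFun 0 = 0
  vanish : ∀ᶠ τ in nhds 0, f (toFun τ) = 0

/-- The order of vanishing at `0` of a germ `ℂ → ℂ`: the exponent of the first
nonvanishing Taylor term, `⊤` for the zero germ (junk value `0` if not analytic). -/
noncomputable def ord (h : ℂ → ℂ) : ℕ∞ :=
  if hh : AnalyticAt ℂ h 0 then analyticOrderAt h 0 else 0

/-- `v(g)`: the minimal order of vanishing of `g` along arcs on `{f = 0} ⊆ ℂ^N`. -/
noncomputable def vArc (N : ℕ) (f g : (Fin N → ℂ) → ℂ) : ℕ∞ :=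
  ⨅ ψ : Arc N f, ord (g ∘ ψ.toFun)

/-- The `i`-th piece `F_i` of the arc filtration: analytic germs `g` with `v(g) ≥ i`. -/
def arcFiltration (N : ℕ) (f : (Fin N → ℂ) → ℂ) (i : ℕ) :
    Set ((Fin N → ℂ) → ℂ) :=
  {g | AnalyticAt ℂ g 0 ∧ (i : ℕ∞) ≤ vArc N f g}

/-- `dimQuotEq F i d` says that `dim_ℂ (F i / F (i+1)) = d`: there are `d` elements of
`F i` such that every element of `F i` has a unique expression as a linear combination
of them modulo `F (i+1)`. -/
def dimQuotEq {M : Type*} [AddCommGroup M] [Module ℂ M]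
    (F : ℕ → Set M) (i d : ℕ) : Prop :=
  ∃ b : Fin d → M, (∀ k, b k ∈ F i) ∧
    ∀ g ∈ F i, ∃! c : Fin d → ℂ, g - ∑ k, c k • b k ∈ F (i + 1)

/-- The stabilization `{f(x,y) - z² = 0} ⊆ ℂ³` of the plane curve `{f = 0}`. -/
def stab (f : (Fin 2 → ℂ) → ℂ) : (Fin 3 → ℂ) → ℂ :=
  fun w => f ![w 0, w 1] - w 2 ^ 2

/-- A reduced (squarefree) analytic germ at `0`: no square of a nonunit divides it. -/
def SquarefreeGerm {N : ℕ} (f : (Fin N → ℂ) → ℂ) : Prop :=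
  ∀ u : (Fin N → ℂ) → ℂ, AnalyticAt ℂ u 0 → u 0 = 0 →
    ¬ ∃ w : (Fin N → ℂ) → ℂ, AnalyticAt ℂ w 0 ∧
      ∀ᶠ x in nhds 0, f x = u x * u x * w x

/-! ### Auxiliary material for the proof -/

open MvPolynomial Asymptotics
open scoped Topology

noncomputable section AuxT333

/-! #### Order-of-vanishing interface via `IsBigO` -/

lemma ord_eq' {h : ℂ → ℂ} (hh : AnalyticAt ℂ h 0) : ord h = analyticOrderAt h 0 := dif_pos hh

lemma pow_isBigO_pow {m n : ℕ} (h : n ≤ m) :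
    (fun τ : ℂ => ‖τ‖ ^ m) =O[𝓝 0] fun τ => ‖τ‖ ^ n := by
  refine IsBigO.of_bound 1 ?_
  filter_upwards [Metric.ball_mem_nhds (0:ℂ) one_pos] with τ hτ
  have hτ1 : ‖τ‖ ≤ 1 := by simpa using (mem_ball_zero_iff.mp hτ).le
  rw [Real.norm_of_nonneg (by positivity), Real.norm_of_nonneg (by positivity), one_mul]
  exact pow_le_pow_of_le_one (norm_nonneg _) hτ1 h

lemma const_eq_zero_of_isBigO {a : ℂ} {j : ℕ}
    (h : (fun τ : ℂ => τ ^ j * a) =O[𝓝 0] fun τ => ‖τ‖ ^ (j + 1)) : a = 0 := by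
  obtain ⟨C, hC⟩ := h.bound
  have h1 : ∀ᶠ τ : ℂ in 𝓝[≠] 0, ‖a‖ ≤ C * ‖τ‖ := by
    filter_upwards [eventually_nhdsWithin_of_eventually_nhds hC, self_mem_nhdsWithin]
      with τ hτ hτ0
    have hτ0' : (0:ℝ) < ‖τ‖ := norm_pos_iff.mpr hτ0
    have hτp : (0:ℝ) < ‖τ‖ ^ j := pow_pos hτ0' j
    rw [norm_mul, norm_pow, Real.norm_of_nonneg (by positivity), pow_succ] at hτ
    have h2 : ‖τ‖ ^ j * ‖a‖ ≤ ‖τ‖ ^ j * (C * ‖τ‖) := by nlinarith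
    exact le_of_mul_le_mul_left h2 hτp
  have h2 : Tendsto (fun τ : ℂ => C * ‖τ‖) (𝓝[≠] 0) (𝓝 0) := by
    have h3 : Tendsto (fun τ : ℂ => C * ‖τ‖) (𝓝 0) (𝓝 (C * ‖(0:ℂ)‖)) :=
      (continuous_const.mul continuous_norm).tendsto 0
    simpa using h3.mono_left nhdsWithin_le_nhds
  have := le_of_tendsto_of_tendsto tendsto_const_nhds h2 h1
  simpa using norm_le_zero_iff.mp this

lemma le_ord_of_isBigO {h : ℂ → ℂ} (hh : AnalyticAt ℂ h 0) {n : ℕ}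
    (hb : h =O[𝓝 0] fun τ => ‖τ‖ ^ n) : (n : ℕ∞) ≤ ord h := by
  rw [ord_eq' hh]
  by_contra hlt
  push_neg at hlt
  set o := analyticOrderAt h 0 with ho
  lift o to ℕ using hlt.ne_top with m hm
  have hmn : m < n := by exact_mod_cast hlt
  obtain ⟨u, hu, hu0, heq⟩ := (hh.analyticOrderAt_eq_natCast (n := m)).mp hm.symm
  obtain ⟨C, hC⟩ := hb.bound
  have key : ∀ᶠ z : ℂ in 𝓝[≠] 0, ‖u z‖ ≤ C * ‖z‖ ^ (n - m) := by
    filter_upwards [eventually_nhdsWithin_of_eventually_nhds (hC.and heq),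
      self_mem_nhdsWithin] with z hz hz0
    obtain ⟨hz1, hz2⟩ := hz
    have hz0' : (0:ℝ) < ‖z‖ := norm_pos_iff.mpr hz0
    have hzp : (0:ℝ) < ‖z‖ ^ m := pow_pos hz0' m
    rw [hz2, sub_zero, smul_eq_mul, norm_mul, norm_pow,
      Real.norm_of_nonneg (by positivity)] at hz1
    have hnm : n = m + (n - m) := by omega
    rw [hnm, pow_add] at hz1
    have h2 : ‖z‖ ^ m * ‖u z‖ ≤ ‖z‖ ^ m * (C * ‖z‖ ^ (n - m)) := by nlinarith
    exact le_of_mul_le_mul_left h2 hzp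
  have h2 : Tendsto (fun z : ℂ => C * ‖z‖ ^ (n - m)) (𝓝[≠] 0) (𝓝 0) := by
    have h3 : Tendsto (fun z : ℂ => C * ‖z‖ ^ (n - m)) (𝓝 0) (𝓝 (C * ‖(0:ℂ)‖ ^ (n - m))) :=
      (continuous_const.mul (continuous_norm.pow _)).tendsto 0
    have hz : C * ‖(0:ℂ)‖ ^ (n - m) = 0 := by
      rw [norm_zero, zero_pow (by omega), mul_zero]
    rw [hz] at h3
    exact h3.mono_left nhdsWithin_le_nhds
  have h3 : Tendsto (fun z : ℂ => ‖u z‖) (𝓝[≠] 0) (𝓝 ‖u 0‖) :=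
    (hu.continuousAt.norm.tendsto).mono_left nhdsWithin_le_nhds
  have := le_of_tendsto_of_tendsto h3 h2 key
  exact hu0 (norm_le_zero_iff.mp this)

lemma isBigO_of_le_ord {h : ℂ → ℂ} (hh : AnalyticAt ℂ h 0) {n : ℕ}
    (hn : (n : ℕ∞) ≤ ord h) : h =O[𝓝 0] fun τ => ‖τ‖ ^ n := by
  rw [ord_eq' hh] at hn
  rcases eq_or_ne (analyticOrderAt h 0) ⊤ with ht | ht
  · have hz : ∀ᶠ z : ℂ in 𝓝 0, h z = 0 := analyticOrderAt_eq_top.mp ht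
    refine IsBigO.of_bound 0 ?_
    filter_upwards [hz] with z hz
    simp [hz]
  · set o := analyticOrderAt h 0 with ho
    lift o to ℕ using ht with m hm
    have hnm : n ≤ m := by exact_mod_cast hn
    obtain ⟨u, hu, hu0, heq⟩ := (hh.analyticOrderAt_eq_natCast (n := m)).mp hm.symm
    have hub : ∀ᶠ z : ℂ in 𝓝 0, ‖u z‖ < ‖u 0‖ + 1 :=
      hu.continuousAt.norm.tendsto.eventually_lt_const (by linarith [norm_nonneg (u 0)])
    refine IsBigO.of_bound (‖u 0‖ + 1) ?_
    filter_upwards [heq, hub, Metric.ball_mem_nhds (0:ℂ) one_pos] with z hz hzu hz1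
    have hz1' : ‖z‖ ≤ 1 := by simpa using (mem_ball_zero_iff.mp hz1).le
    rw [hz, sub_zero, smul_eq_mul, norm_mul, norm_pow,
      Real.norm_of_nonneg (by positivity)]
    have h1 : ‖z‖ ^ m ≤ ‖z‖ ^ n := pow_le_pow_of_le_one (norm_nonneg _) hz1' hnm
    nlinarith [norm_nonneg (u z), norm_nonneg (u 0), pow_nonneg (norm_nonneg z) n,
      pow_nonneg (norm_nonneg z) m]

lemma ord_pos_of_zero {h : ℂ → ℂ} (hh : AnalyticAt ℂ h 0) (h0 : h 0 = 0) :
    (1 : ℕ∞) ≤ ord h := by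
  rw [ord_eq' hh]
  rw [ENat.one_le_iff_ne_zero]
  intro hc
  obtain ⟨u, hu, hu0, heq⟩ := (hh.analyticOrderAt_eq_natCast (n := 0)).mp (by exact_mod_cast hc)
  have := heq.self_of_nhds
  simp only [pow_zero, one_smul] at this
  rw [h0] at this
  exact hu0 this.symm

lemma ord_const_ne {a : ℂ} (ha : a ≠ 0) : ¬ ((1 : ℕ∞) ≤ ord (fun _ : ℂ => a)) := by
  intro hle
  have hh : AnalyticAt ℂ (fun _ : ℂ => a) 0 := analyticAt_const
  rw [ord_eq' hh] at hle
  have h0 : analyticOrderAt (fun _ : ℂ => a) 0 = ((0 : ℕ) : ℕ∞) := by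
    rw [hh.analyticOrderAt_eq_natCast]
    exact ⟨fun _ => a, analyticAt_const, ha, by simp⟩
  rw [h0] at hle
  exact absurd hle (by norm_num)

noncomputable def fPoly : MvPolynomial (Fin 3) ℂ := X 0 ^ 3 + X 1 ^ 3 + X 2 ^ 3

lemma cube_roots {w : ℂ} (hw : w ≠ 0) :
    ∃ r : Fin 3 → ℂ, Function.Injective r ∧ ∀ l, r l ^ 3 = w := by
  obtain ⟨z, hz⟩ := IsAlgClosed.exists_pow_nat_eq w (n := 3) (by norm_num)
  have hz0 : z ≠ 0 := by rintro rfl; simp at hz; exact hw hz.symm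
  have hdeg : (Polynomial.X ^ 2 + Polynomial.X + 1 : Polynomial ℂ).degree = 2 := by
    compute_degree!
  obtain ⟨ζ, hζ⟩ := IsAlgClosed.exists_root
    (p := (Polynomial.X ^ 2 + Polynomial.X + 1 : Polynomial ℂ)) (by rw [hdeg]; norm_num)
  rw [Polynomial.IsRoot, Polynomial.eval_add, Polynomial.eval_add, Polynomial.eval_pow,
    Polynomial.eval_X, Polynomial.eval_one] at hζ
  have hζ3 : ζ ^ 3 = 1 := by linear_combination (ζ - 1) * hζ
  have hζ1 : ζ ≠ 1 := by rintro rfl; norm_num at hζ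
  have hζ0 : ζ ≠ 0 := by rintro rfl; norm_num at hζ
  have hζ2 : ζ ^ 2 ≠ 1 := by
    intro h
    have h3 := hζ3
    rw [pow_succ, h, one_mul] at h3
    exact hζ1 h3
  have hζ21 : ζ ^ 2 ≠ ζ := by
    intro h
    rw [sq] at h
    exact hζ1 (mul_left_cancel₀ hζ0 (by simpa using h))
  have h01 : z ≠ ζ * z := fun h => hζ1 (mul_right_cancel₀ hz0 (by rw [← h, one_mul])).symm
  have h02 : z ≠ ζ ^ 2 * z := fun h => hζ2 (mul_right_cancel₀ hz0 (by rw [← h, one_mul]))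
  have h12 : ζ * z ≠ ζ ^ 2 * z := fun h => hζ21 (mul_right_cancel₀ hz0 h.symm)
  refine ⟨![z, ζ * z, ζ ^ 2 * z], ?_, ?_⟩
  · intro a b hab
    fin_cases a <;> fin_cases b <;>
      simp only [Fin.mk_zero, Fin.mk_one, Matrix.cons_val_zero, Matrix.cons_val_one,
        Matrix.head_cons, Fin.isValue, Matrix.cons_val_two, Matrix.tail_cons] at hab <;>
      first
        | rfl
        | exact absurd hab h01
        | exact absurd hab h02
        | exact absurd hab h12
        | exact absurd hab.symm h01
        | exact absurd hab.symm h02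
        | exact absurd hab.symm h12
  · intro l
    fin_cases l
    · simpa using hz
    · show (ζ * z) ^ 3 = w
      linear_combination z ^ 3 * hζ3 + hz
    · show (ζ ^ 2 * z) ^ 3 = w
      linear_combination (ζ ^ 3 + 1) * z ^ 3 * hζ3 + hz

lemma finSuccEquiv_fPoly :
    finSuccEquiv ℂ 2 fPoly = Polynomial.X ^ 3 +
      Polynomial.C (X 0 ^ 3 + X 1 ^ 3 : MvPolynomial (Fin 2) ℂ) := by
  have h1 : (X 1 : MvPolynomial (Fin 3) ℂ) = X (Fin.succ 0) := rfl
  have h2 : (X 2 : MvPolynomial (Fin 3) ℂ) = X (Fin.succ 1) := rfl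
  rw [fPoly, map_add, map_add, map_pow, map_pow, map_pow, finSuccEquiv_X_zero,
    h1, h2, finSuccEquiv_X_succ, finSuccEquiv_X_succ, map_add, ← Polynomial.C_pow,
    ← Polynomial.C_pow]
  ring

lemma fPoly_monic : (finSuccEquiv ℂ 2 fPoly).Monic := by
  rw [finSuccEquiv_fPoly]
  exact Polynomial.monic_X_pow_add (n := 3) (lt_of_le_of_lt Polynomial.degree_C_le (by norm_num))

lemma div_fPoly (P : MvPolynomial (Fin 3) ℂ) :
    ∃ Q A : MvPolynomial (Fin 3) ℂ, P = fPoly * Q + A ∧ A.degreeOf 0 ≤ 2 := by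
  refine ⟨(finSuccEquiv ℂ 2).symm (finSuccEquiv ℂ 2 P /ₘ finSuccEquiv ℂ 2 fPoly),
    (finSuccEquiv ℂ 2).symm (finSuccEquiv ℂ 2 P %ₘ finSuccEquiv ℂ 2 fPoly), ?_, ?_⟩
  · apply (finSuccEquiv ℂ 2).injective
    rw [map_add, map_mul, (finSuccEquiv ℂ 2).apply_symm_apply,
      (finSuccEquiv ℂ 2).apply_symm_apply]
    have hdiv := Polynomial.modByMonic_add_div (finSuccEquiv ℂ 2 P) (finSuccEquiv ℂ 2 fPoly)
    conv_lhs => rw [← hdiv]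
    ring
  · have hd3 : (finSuccEquiv ℂ 2 fPoly).degree = 3 := by
      rw [finSuccEquiv_fPoly]
      exact Polynomial.degree_X_pow_add_C (by norm_num) _
    have hdeg : (finSuccEquiv ℂ 2 P %ₘ finSuccEquiv ℂ 2 fPoly).degree < (3 : ℕ) := by
      have h := Polynomial.degree_modByMonic_lt (finSuccEquiv ℂ 2 P) fPoly_monic
      rw [hd3] at h
      exact_mod_cast h
    have hnd : (finSuccEquiv ℂ 2 P %ₘ finSuccEquiv ℂ 2 fPoly).natDegree ≤ 2 := by
      rcases eq_or_ne (finSuccEquiv ℂ 2 P %ₘ finSuccEquiv ℂ 2 fPoly) 0 with h0 | h0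
      · simp [h0]
      · have h2 := (Polynomial.natDegree_lt_iff_degree_lt h0).mpr hdeg
        omega
    have h3 := natDegree_finSuccEquiv
      ((finSuccEquiv ℂ 2).symm (finSuccEquiv ℂ 2 P %ₘ finSuccEquiv ℂ 2 fPoly))
    rw [show finSuccEquiv ℂ 2 ((finSuccEquiv ℂ 2).symm
        (finSuccEquiv ℂ 2 P %ₘ finSuccEquiv ℂ 2 fPoly)) =
        finSuccEquiv ℂ 2 P %ₘ finSuccEquiv ℂ 2 fPoly from
      (finSuccEquiv ℂ 2).apply_symm_apply _] at h3
    omega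

lemma poly_eq_zero_of_vanish (A : MvPolynomial (Fin 3) ℂ) (hdeg : A.degreeOf 0 ≤ 2)
    (hvan : ∀ v : Fin 3 → ℂ, v 0 ^ 3 + v 1 ^ 3 + v 2 ^ 3 = 0 → eval v A = 0) : A = 0 := by
  have hAdeg : (finSuccEquiv ℂ 2 A).natDegree ≤ 2 := by rw [natDegree_finSuccEquiv]; exact hdeg
  have hcoeff : ∀ j : ℕ, (finSuccEquiv ℂ 2 A).coeff j = 0 := by
    intro j
    have key : ∀ u : Fin 2 → ℂ,
        eval u ((X 0 ^ 3 + X 1 ^ 3 : MvPolynomial (Fin 2) ℂ) * (finSuccEquiv ℂ 2 A).coeff j) = 0 := by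
      intro u
      rcases eq_or_ne (u 0 ^ 3 + u 1 ^ 3) 0 with h0 | h0
      · rw [eval_mul]
        simp only [eval_add, eval_pow, eval_X]
        rw [h0, zero_mul]
      · have hq : ∀ x : ℂ, x ^ 3 = -(u 0 ^ 3 + u 1 ^ 3) →
            Polynomial.eval x ((finSuccEquiv ℂ 2 A).map (eval u)) = 0 := by
          intro x hx
          rw [← eval_eq_eval_mv_eval']
          apply hvan
          rw [show (Fin.cons x u : Fin 3 → ℂ) 0 = x from rfl,
            show (Fin.cons x u : Fin 3 → ℂ) 1 = u 0 from rfl,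
            show (Fin.cons x u : Fin 3 → ℂ) 2 = u 1 from rfl, hx]
          ring
        obtain ⟨r, hrinj, hr⟩ := cube_roots (w := -(u 0 ^ 3 + u 1 ^ 3)) (neg_ne_zero.mpr h0)
        have hq0 : (finSuccEquiv ℂ 2 A).map (eval u) = 0 := by
          apply Polynomial.eq_zero_of_natDegree_lt_card_of_eval_eq_zero _ hrinj
            (fun l => hq _ (hr l))
          calc ((finSuccEquiv ℂ 2 A).map (eval u)).natDegree ≤ (finSuccEquiv ℂ 2 A).natDegree :=
                Polynomial.natDegree_map_le
            _ ≤ 2 := hAdeg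
            _ < Fintype.card (Fin 3) := by simp
        have := congrArg (fun q => Polynomial.coeff q j) hq0
        simp only [Polynomial.coeff_map, Polynomial.coeff_zero] at this
        rw [eval_mul, this, mul_zero]
    have hz : (X 0 ^ 3 + X 1 ^ 3 : MvPolynomial (Fin 2) ℂ) * (finSuccEquiv ℂ 2 A).coeff j = 0 :=
      MvPolynomial.funext fun x => by rw [key x, map_zero]
    rcases mul_eq_zero.mp hz with h | h
    · exfalso
      have := congrArg (eval (fun l : Fin 2 => if l = 0 then (1:ℂ) else 0)) h
      simp at this
    · exact h
  have hA0 : finSuccEquiv ℂ 2 A = 0 := Polynomial.ext fun n => by simp [hcoeff]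
  have := congrArg (finSuccEquiv ℂ 2).symm hA0
  simpa using this

noncomputable def Tpoly (p : FormalMultilinearSeries ℂ (Fin 3 → ℂ) ℂ) (k : ℕ) :
    MvPolynomial (Fin 3) ℂ :=
  ∑ d : Fin k → Fin 3, C (p k fun j => (Pi.single (d j) 1 : Fin 3 → ℂ)) * ∏ j, X (d j)

lemma eval_Tpoly (p : FormalMultilinearSeries ℂ (Fin 3 → ℂ) ℂ) (k : ℕ) (v : Fin 3 → ℂ) :
    eval v (Tpoly p k) = p k fun _ => v := by
  have hv : v = ∑ l : Fin 3, v l • (Pi.single l 1 : Fin 3 → ℂ) := by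
    funext m
    rw [Finset.sum_apply]
    simp [Pi.single_apply]
  conv_rhs => rw [show (fun _ : Fin k => v) =
    (fun _ : Fin k => ∑ l : Fin 3, v l • (Pi.single l 1 : Fin 3 → ℂ)) from funext fun _ => hv]
  rw [(p k).map_sum]
  simp_rw [(p k).map_smul_univ]
  rw [Tpoly, map_sum]
  congr 1
  funext d
  rw [eval_mul, eval_C, eval_prod]
  simp only [eval_X, smul_eq_mul]
  ring

lemma eval_Tpoly_smul (p : FormalMultilinearSeries ℂ (Fin 3 → ℂ) ℂ) (k : ℕ) (τ : ℂ)
    (v : Fin 3 → ℂ) : eval (τ • v) (Tpoly p k) = τ ^ k * eval v (Tpoly p k) := by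
  rw [eval_Tpoly, eval_Tpoly]
  have h := (p k).map_smul_univ (fun _ : Fin k => τ) (fun _ => v)
  simp only [Finset.prod_const, Finset.card_univ, Fintype.card_fin, smul_eq_mul] at h
  convert h using 2

lemma Tpoly_homog (p : FormalMultilinearSeries ℂ (Fin 3 → ℂ) ℂ) (k : ℕ) :
    (Tpoly p k).IsHomogeneous k := by
  apply IsHomogeneous.sum
  intro d _
  have hp : (∏ j, (X (d j) : MvPolynomial (Fin 3) ℂ)).IsHomogeneous k := by
    have := IsHomogeneous.prod Finset.univ (fun j => (X (d j) : MvPolynomial (Fin 3) ℂ))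
      (fun _ => 1) (fun j _ => isHomogeneous_X _ _)
    simpa using this
  simpa using (isHomogeneous_C _ (p k fun j => (Pi.single (d j) 1 : Fin 3 → ℂ))).mul hp

lemma partialSum_eq (p : FormalMultilinearSeries ℂ (Fin 3 → ℂ) ℂ) (n : ℕ) (v : Fin 3 → ℂ) :
    p.partialSum n v = ∑ k ∈ Finset.range n, eval v (Tpoly p k) := by
  rw [FormalMultilinearSeries.partialSum]
  congr 1
  funext k
  rw [eval_Tpoly]

noncomputable def expo (i c a : ℕ) : Fin 3 →₀ ℕ :=
  Finsupp.single 0 c + Finsupp.single 1 a + Finsupp.single 2 (i - c - a)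

lemma expo_apply0 (i c a : ℕ) : expo i c a 0 = c := by
  simp [expo, Finsupp.single_apply]
lemma expo_apply1 (i c a : ℕ) : expo i c a 1 = a := by
  simp [expo, Finsupp.single_apply]
lemma expo_apply2 (i c a : ℕ) : expo i c a 2 = i - c - a := by
  simp [expo, Finsupp.single_apply]

noncomputable def eIdx (i k : ℕ) : Fin 3 →₀ ℕ :=
  if k ≤ i then expo i 0 k
  else if k ≤ 2 * i then expo i 1 (k - (i + 1))
  else expo i 2 (k - (2 * i + 1))

def kOf (i : ℕ) (d : Fin 3 →₀ ℕ) : ℕ :=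
  if d 0 = 0 then d 1 else if d 0 = 1 then i + 1 + d 1 else 2 * i + 1 + d 1

lemma degree3 (d : Fin 3 →₀ ℕ) : d.degree = d 0 + d 1 + d 2 := by
  show ∑ i ∈ d.support, d i = _
  rw [Finset.sum_subset (Finset.subset_univ d.support)
    (fun x _ hx => Finsupp.notMem_support_iff.mp hx), Fin.sum_univ_three]

lemma eIdx_zero_le (i k : ℕ) : eIdx i k 0 ≤ 2 := by
  rw [eIdx]; split_ifs <;> simp [expo_apply0]

lemma eIdx_sum {i k : ℕ} (hk : k < 3 * i) :
    eIdx i k 0 + eIdx i k 1 + eIdx i k 2 = i := by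
  rw [eIdx]; split_ifs with h1 h2 <;>
    rw [expo_apply0, expo_apply1, expo_apply2] <;> omega

lemma kOf_eIdx {i k : ℕ} (hk : k < 3 * i) : kOf i (eIdx i k) = k := by
  rw [eIdx]
  split_ifs with h1 h2 <;> rw [kOf] <;> split_ifs with h3 h4 <;>
    simp only [expo_apply0, expo_apply1, expo_apply2] at * <;>
    first | omega | simp_all

lemma finsupp3_ext {d e : Fin 3 →₀ ℕ} (h0 : d 0 = e 0) (h1 : d 1 = e 1)
    (h2 : d 2 = e 2) : d = e := by
  ext l
  fin_cases l
  · exact h0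
  · exact h1
  · exact h2

lemma eIdx_kOf {i : ℕ} {d : Fin 3 →₀ ℕ} (h0 : d 0 ≤ 2) (hs : d 0 + d 1 + d 2 = i) :
    eIdx i (kOf i d) = d := by
  refine finsupp3_ext ?_ ?_ ?_ <;> rw [kOf] <;> split_ifs with ha hb <;> rw [eIdx] <;>
    split_ifs with hc hd <;>
    simp only [expo_apply0, expo_apply1, expo_apply2] at * <;>
    first | omega | simp_all

lemma kOf_lt {i : ℕ} {d : Fin 3 →₀ ℕ} (hi : 1 ≤ i) (h0 : d 0 ≤ 2)
    (hs : d 0 + d 1 + d 2 = i) : kOf i d < 3 * i := by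
  rw [kOf]; split_ifs <;> omega

def fT : (Fin 3 → ℂ) → ℂ := fun w => w 0 ^ 3 + w 1 ^ 3 + w 2 ^ 3

lemma analyticAt_eval (P : MvPolynomial (Fin 3) ℂ) (x : Fin 3 → ℂ) :
    AnalyticAt ℂ (fun w => eval w P) x := by
  induction P using MvPolynomial.induction_on with
  | C a => simpa using analyticAt_const (v := a)
  | add p q hp hq => simp only [map_add]; exact hp.add hq
  | mul_X p n hp =>
      have hc : AnalyticAt ℂ (fun w : Fin 3 → ℂ => w n) x :=
        (ContinuousLinearMap.proj n : (Fin 3 → ℂ) →L[ℂ] ℂ).analyticAt x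
      simp only [map_mul, eval_X]; exact hp.mul hc

lemma analyticAt_line (v : Fin 3 → ℂ) : AnalyticAt ℂ (fun τ : ℂ => τ • v) 0 :=
  (ContinuousLinearMap.smulRight (ContinuousLinearMap.id ℂ ℂ) v).analyticAt 0

lemma tendsto_line (v : Fin 3 → ℂ) : Tendsto (fun τ : ℂ => τ • v) (𝓝 0) (𝓝 0) := by
  have h := (analyticAt_line v).continuousAt.tendsto
  simpa using h

lemma prod_pow_le (w : Fin 3 → ℂ) (d : Fin 3 →₀ ℕ) {i : ℕ}
    (hd : d 0 + d 1 + d 2 = i) : ‖∏ l : Fin 3, w l ^ d l‖ ≤ ‖w‖ ^ i := by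
  calc ‖∏ l : Fin 3, w l ^ d l‖ = ∏ l : Fin 3, ‖w l‖ ^ d l := by
        rw [norm_prod]; simp [norm_pow]
    _ ≤ ∏ l : Fin 3, ‖w‖ ^ d l := by
        refine Finset.prod_le_prod (fun l _ => by positivity) (fun l _ => ?_)
        exact pow_le_pow_left₀ (norm_nonneg _) (norm_le_pi_norm w l) _
    _ = ‖w‖ ^ i := by
        rw [Finset.prod_pow_eq_pow_sum]
        rw [Fin.sum_univ_three, hd]

lemma eval_monomial_prod (w : Fin 3 → ℂ) (d : Fin 3 →₀ ℕ) :
    eval w (monomial d (1:ℂ)) = ∏ l : Fin 3, w l ^ d l := by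
  rw [eval_monomial, one_mul]
  exact Finsupp.prod_fintype _ _ (fun l => pow_zero _)


lemma eval_fPoly (w : Fin 3 → ℂ) : eval w fPoly = fT w := by
  simp [fPoly, fT]

lemma fPoly_isHomogeneous : fPoly.IsHomogeneous 3 := by
  apply MvPolynomial.IsHomogeneous.add
  apply MvPolynomial.IsHomogeneous.add
  · simpa using (isHomogeneous_X ℂ (0 : Fin 3)).pow 3
  · simpa using (isHomogeneous_X ℂ (1 : Fin 3)).pow 3
  · simpa using (isHomogeneous_X ℂ (2 : Fin 3)).pow 3

lemma homog_div {P : MvPolynomial (Fin 3) ℂ} {i : ℕ} (hP : P.IsHomogeneous i)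
    {Q A : MvPolynomial (Fin 3) ℂ} (hPQA : P = fPoly * Q + A) :
    ∃ Q' : MvPolynomial (Fin 3) ℂ, P = fPoly * Q' + homogeneousComponent i A := by
  have h := congrArg (homogeneousComponent i) hPQA
  rw [map_add] at h
  rw [homogeneousComponent_of_mem ((mem_homogeneousSubmodule _ _).mpr hP),
    if_pos rfl] at h
  have hfq : homogeneousComponent i (fPoly * Q) =
      fPoly * (∑ k ∈ Finset.range (Q.totalDegree + 1),
        if 3 + k = i then homogeneousComponent k Q else 0) := by
    conv_lhs => rw [show fPoly * Q =
      ∑ k ∈ Finset.range (Q.totalDegree + 1), fPoly * homogeneousComponent k Q by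
        rw [← Finset.mul_sum, sum_homogeneousComponent]]
    rw [map_sum, Finset.mul_sum]
    refine Finset.sum_congr rfl (fun k _ => ?_)
    have hhom : (fPoly * homogeneousComponent k Q).IsHomogeneous (3 + k) :=
      fPoly_isHomogeneous.mul (homogeneousComponent_isHomogeneous k Q)
    rw [homogeneousComponent_of_mem ((mem_homogeneousSubmodule _ _).mpr hhom)]
    by_cases hk : i = 3 + k
    · rw [if_pos hk, if_pos hk.symm]
    · rw [if_neg hk, if_neg (fun h => hk h.symm), mul_zero]
  exact ⟨_, by rw [h, hfq]⟩

lemma basisRep {i : ℕ} (hi : 1 ≤ i) (Ai : MvPolynomial (Fin 3) ℂ)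
    (hsupp : ∀ d : Fin 3 →₀ ℕ, coeff d Ai ≠ 0 → d.degree = i ∧ d 0 ≤ 2) :
    Ai = ∑ k : Fin (3 * i), monomial (eIdx i k) (coeff (eIdx i k) Ai) := by
  ext d
  rw [coeff_sum]
  simp_rw [coeff_monomial]
  rcases eq_or_ne (coeff d Ai) 0 with h0 | h0
  · rw [h0]
    refine (Finset.sum_eq_zero fun k _ => ?_).symm
    split_ifs with h
    · rw [h, h0]
    · rfl
  · obtain ⟨hdeg, hd0⟩ := hsupp d h0
    have hsum : d 0 + d 1 + d 2 = i := by rw [degree3] at hdeg; exact hdeg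
    have hk : kOf i d < 3 * i := kOf_lt hi hd0 hsum
    rw [Finset.sum_eq_single (⟨kOf i d, hk⟩ : Fin (3 * i))]
    · rw [if_pos]
      · rw [eIdx_kOf hd0 hsum]
      · exact eIdx_kOf hd0 hsum
    · intro k _ hkne
      rw [if_neg]
      intro he
      apply hkne
      apply Fin.ext
      have h1 := kOf_eIdx (i := i) (k := (k : ℕ)) k.isLt
      rw [he] at h1
      simp only [Fin.val_mk]
      omega
    · intro h; exact absurd (Finset.mem_univ _) h

lemma coeff_sum_monomial_eIdx {i : ℕ} (c : Fin (3 * i) → ℂ) (k0 : Fin (3 * i)) :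
    coeff (eIdx i k0) (∑ k : Fin (3 * i), monomial (eIdx i k) (c k)) = c k0 := by
  rw [coeff_sum]
  simp_rw [coeff_monomial]
  rw [Finset.sum_eq_single k0]
  · rw [if_pos rfl]
  · intro k _ hkne
    rw [if_neg]
    intro he
    apply hkne
    apply Fin.ext
    have h1 := kOf_eIdx (i := i) (k := (k : ℕ)) k.isLt
    have h2 := kOf_eIdx (i := i) (k := (k0 : ℕ)) k0.isLt
    rw [he] at h1
    omega
  · intro h; exact absurd (Finset.mem_univ _) h

lemma degreeOf_sum_monomial {i : ℕ} (c : Fin (3 * i) → ℂ) :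
    degreeOf 0 (∑ k : Fin (3 * i), monomial (eIdx i k) (c k)) ≤ 2 := by
  rw [degreeOf_le_iff]
  intro m hm
  rw [mem_support_iff, coeff_sum] at hm
  obtain ⟨k, -, hk⟩ := Finset.exists_ne_zero_of_sum_ne_zero hm
  rw [coeff_monomial] at hk
  have he : eIdx i (k : ℕ) = m := by
    by_contra hne
    rw [if_neg hne] at hk
    exact hk rfl
  rw [← he]
  exact eIdx_zero_le i k

/-! #### Arcs on the cone -/

def lineArc (v : Fin 3 → ℂ) (hv : fT v = 0) : Arc 3 fT where
  toFun τ := τ • v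
  analyticAt := analyticAt_line v
  map_zero := zero_smul ℂ v
  vanish := Eventually.of_forall fun τ => by
    show fT (τ • v) = 0
    have hv' : v 0 ^ 3 + v 1 ^ 3 + v 2 ^ 3 = 0 := hv
    simp only [fT, Pi.smul_apply, smul_eq_mul]
    linear_combination τ ^ 3 * hv'

def zeroArc : Arc 3 fT where
  toFun _ := 0
  analyticAt := analyticAt_const
  map_zero := rfl
  vanish := Eventually.of_forall fun τ => by simp [fT]

lemma le_ord_comp_arc {F R : (Fin 3 → ℂ) → ℂ} {n : ℕ} (hF : AnalyticAt ℂ F 0)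
    (hR : R =O[𝓝 0] fun w : Fin 3 → ℂ => ‖w‖ ^ n)
    (hFR : ∀ w, fT w = 0 → F w = R w) (ψ : Arc 3 fT) :
    (n : ℕ∞) ≤ ord (F ∘ ψ.toFun) := by
  have hψa : AnalyticAt ℂ ψ.toFun 0 := ψ.analyticAt
  have hF0 : AnalyticAt ℂ F (ψ.toFun 0) := by rw [ψ.map_zero]; exact hF
  have hcomp : AnalyticAt ℂ (F ∘ ψ.toFun) 0 := hF0.comp hψa
  apply le_ord_of_isBigO hcomp
  have htend : Tendsto ψ.toFun (𝓝 0) (𝓝 0) := by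
    have h := hψa.continuousAt.tendsto
    rwa [ψ.map_zero] at h
  have h1 : (fun τ => R (ψ.toFun τ)) =O[𝓝 0] fun τ => ‖ψ.toFun τ‖ ^ n :=
    hR.comp_tendsto htend
  have h2 : (fun τ => ‖ψ.toFun τ‖) =O[𝓝 0] fun τ : ℂ => τ := by
    have hd := hψa.differentiableAt.isBigO_sub
    simp only [ψ.map_zero, sub_zero] at hd
    exact hd.norm_left
  have h3 : (fun τ => ‖ψ.toFun τ‖ ^ n) =O[𝓝 0] fun τ : ℂ => ‖τ‖ ^ n := by
    refine (h2.pow n).trans (IsBigO.of_bound 1 (Eventually.of_forall fun τ => ?_))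
    simp [norm_pow]
  have hEq : F ∘ ψ.toFun =ᶠ[𝓝 0] fun τ => R (ψ.toFun τ) := by
    filter_upwards [ψ.vanish] with τ hτ
    exact hFR _ hτ
  exact hEq.trans_isBigO (h1.trans h3)

lemma mem_arcFiltration_of {F R : (Fin 3 → ℂ) → ℂ} {n : ℕ} (hF : AnalyticAt ℂ F 0)
    (hR : R =O[𝓝 0] fun w : Fin 3 → ℂ => ‖w‖ ^ n)
    (hFR : ∀ w, fT w = 0 → F w = R w) : F ∈ arcFiltration 3 fT n :=
  ⟨hF, le_iInf fun ψ => le_ord_comp_arc hF hR hFR ψ⟩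

/-! #### The monomial basis functions -/

def bFun (i k : ℕ) : (Fin 3 → ℂ) → ℂ := fun w => ∏ l : Fin 3, w l ^ eIdx i k l

lemma eval_monomial_gen (w : Fin 3 → ℂ) (d : Fin 3 →₀ ℕ) (a : ℂ) :
    eval w (monomial d a) = a * ∏ l : Fin 3, w l ^ d l := by
  rw [eval_monomial]
  congr 1
  exact Finsupp.prod_fintype _ _ (fun l => pow_zero _)

lemma bFun_analytic (i k : ℕ) : AnalyticAt ℂ (bFun i k) 0 := by
  have h := analyticAt_eval (monomial (eIdx i k) (1:ℂ)) 0
  have heq : (fun w => eval w (monomial (eIdx i k) (1:ℂ))) = bFun i k :=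
    funext fun w => by rw [eval_monomial_gen, one_mul]; rfl
  rwa [heq] at h

lemma bFun_isBigO {i k : ℕ} (hk : k < 3 * i) :
    bFun i k =O[𝓝 0] fun w : Fin 3 → ℂ => ‖w‖ ^ i :=
  IsBigO.of_bound 1 (Eventually.of_forall fun w => by
    rw [one_mul, Real.norm_of_nonneg (by positivity)]
    exact prod_pow_le w _ (eIdx_sum hk))

lemma bFun_mem {i k : ℕ} (hk : k < 3 * i) : bFun i k ∈ arcFiltration 3 fT i :=
  mem_arcFiltration_of (bFun_analytic i k) (bFun_isBigO hk) (fun _ _ => rfl)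

lemma bFun_smul {i k : ℕ} (hk : k < 3 * i) (τ : ℂ) (v : Fin 3 → ℂ) :
    bFun i k (τ • v) = τ ^ i * bFun i k v := by
  rw [bFun, bFun]
  simp only [Pi.smul_apply, smul_eq_mul, mul_pow]
  rw [Finset.prod_mul_distrib, Finset.prod_pow_eq_pow_sum, Fin.sum_univ_three, eIdx_sum hk]

/-! #### The two dimension computations -/

lemma dimQuot_zero : dimQuotEq (arcFiltration 3 fT) 0 1 := by
  refine ⟨fun _ _ => 1, fun k => ⟨analyticAt_const, by simp⟩, ?_⟩
  rintro g ⟨hga, -⟩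
  have hsum1 : ∀ c : Fin 1 → ℂ, (∑ k : Fin 1, c k • (fun _ : Fin 3 → ℂ => (1:ℂ)))
      = fun _ => c 0 := by
    intro c; funext w; simp
  refine ⟨fun _ => g 0, ⟨?_, ?_⟩, ?_⟩
  · have h1 : g - (∑ k : Fin 1, (fun _ : Fin 1 => g 0) k • (fun _ : Fin 3 → ℂ => (1:ℂ)))
        = fun w => g w - g 0 := by rw [hsum1]; funext w; simp
    rw [h1]
    exact hga.sub analyticAt_const
  · refine le_iInf fun ψ => ?_
    have h1 : g - (∑ k : Fin 1, (fun _ : Fin 1 => g 0) k • (fun _ : Fin 3 → ℂ => (1:ℂ)))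
        = fun w => g w - g 0 := by rw [hsum1]; funext w; simp
    rw [h1]
    have hψa : AnalyticAt ℂ ψ.toFun 0 := ψ.analyticAt
    have hga' : AnalyticAt ℂ g (ψ.toFun 0) := by rw [ψ.map_zero]; exact hga
    have hA : AnalyticAt ℂ ((fun w => g w - g 0) ∘ ψ.toFun) 0 :=
      (hga'.sub analyticAt_const).comp hψa
    have h0 : ((fun w => g w - g 0) ∘ ψ.toFun) 0 = 0 := by
      simp [Function.comp, ψ.map_zero]
    exact_mod_cast ord_pos_of_zero hA h0
  · intro y hy
    have h1 : g - (∑ k : Fin 1, y k • (fun _ : Fin 3 → ℂ => (1:ℂ)))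
        = fun w => g w - y 0 := by rw [hsum1]; funext w; simp
    rw [h1] at hy
    have h2 : ((1 : ℕ) : ℕ∞) ≤ ord ((fun w => g w - y 0) ∘ zeroArc.toFun) :=
      le_trans hy.2 (iInf_le _ zeroArc)
    have h3 : ((fun w => g w - y 0) ∘ zeroArc.toFun) = fun _ : ℂ => g 0 - y 0 := rfl
    rw [h3] at h2
    have h4 : g 0 - y 0 = 0 := by
      by_contra hne
      exact ord_const_ne hne (by exact_mod_cast h2)
    funext k
    have : k = 0 := Subsingleton.elim k 0
    rw [this]
    exact (sub_eq_zero.mp h4).symm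

lemma dimQuot_pos (i : ℕ) (hi : 1 ≤ i) : dimQuotEq (arcFiltration 3 fT) i (3 * i) := by
  refine ⟨fun k => bFun i k, fun k => bFun_mem k.isLt, ?_⟩
  rintro g ⟨hga, hvg⟩
  obtain ⟨p, hp⟩ := hga
  have hga : AnalyticAt ℂ g 0 := ⟨p, hp⟩
  have hline_ord : ∀ v : Fin 3 → ℂ, fT v = 0 → (i : ℕ∞) ≤ ord (fun τ : ℂ => g (τ • v)) := by
    intro v hv
    exact le_trans hvg (iInf_le _ (lineArc v hv))
  have hlineA : ∀ v : Fin 3 → ℂ, AnalyticAt ℂ (fun τ : ℂ => g (τ • v)) 0 := by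
    intro v
    have h0 : AnalyticAt ℂ g ((fun τ : ℂ => τ • v) 0) := by
      show AnalyticAt ℂ g ((0:ℂ) • v)
      rw [zero_smul]
      exact hga
    exact AnalyticAt.comp (x := (0:ℂ)) h0 (analyticAt_line v)
  -- Step 1: Taylor forms of degree `< i` vanish on the cone
  have hvanish : ∀ j, j < i → ∀ v : Fin 3 → ℂ, fT v = 0 → eval v (Tpoly p j) = 0 := by
    intro j
    induction j using Nat.strong_induction_on with
    | _ j IH =>
      intro hj v hv
      have hji : j + 1 ≤ i := hj
      have h1 : (fun τ : ℂ => g (τ • v)) =O[𝓝 0] fun τ => ‖τ‖ ^ (j + 1) :=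
        isBigO_of_le_ord (hlineA v) (le_trans (by exact_mod_cast hji) (hline_ord v hv))
      have hb := (hp.isBigO_sub_partialSum_pow (j + 1)).comp_tendsto (tendsto_line v)
      have hb2 : (fun τ : ℂ => g (τ • v) - p.partialSum (j + 1) (τ • v)) =O[𝓝 0]
          fun τ : ℂ => ‖τ‖ ^ (j + 1) := by
        have hbound : (fun τ : ℂ => ‖τ • v‖ ^ (j + 1)) =O[𝓝 0] fun τ : ℂ => ‖τ‖ ^ (j + 1) := by
          refine IsBigO.of_bound (‖v‖ ^ (j + 1)) (Eventually.of_forall fun τ => ?_)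
          rw [Real.norm_of_nonneg (by positivity), Real.norm_of_nonneg (by positivity),
            norm_smul, mul_pow]
          rw [mul_comm]
        have hb' : (fun τ : ℂ => g (τ • v) - p.partialSum (j + 1) (τ • v)) =O[𝓝 0]
            fun τ : ℂ => ‖τ • v‖ ^ (j + 1) := by simpa [Function.comp_def] using hb
        exact hb'.trans hbound
      have hps : ∀ τ : ℂ, p.partialSum (j + 1) (τ • v) = τ ^ j * eval v (Tpoly p j) := by
        intro τ
        rw [partialSum_eq, Finset.sum_range_succ, eval_Tpoly_smul]
        have hz : ∀ k ∈ Finset.range j, eval (τ • v) (Tpoly p k) = 0 := by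
          intro k hk
          rw [eval_Tpoly_smul,
            IH k (Finset.mem_range.mp hk) (lt_trans (Finset.mem_range.mp hk) hj) v hv,
            mul_zero]
        rw [Finset.sum_eq_zero hz, zero_add]
      have h4 : (fun τ : ℂ => τ ^ j * eval v (Tpoly p j)) =O[𝓝 0] fun τ => ‖τ‖ ^ (j + 1) := by
        refine (h1.sub hb2).congr_left fun τ => ?_
        rw [hps τ]
        ring
      exact const_eq_zero_of_isBigO h4
  -- Step 2: division with remainder by `fPoly`
  choose Qlow Alow hQA hAdeg using fun j : ℕ => div_fPoly (Tpoly p j)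
  have hAlow0 : ∀ j, j < i → Alow j = 0 := by
    intro j hj
    apply poly_eq_zero_of_vanish _ (hAdeg j)
    intro v hv
    have hfv : fT v = 0 := hv
    have h2 := congrArg (MvPolynomial.eval v) (hQA j)
    rw [hvanish j hj v hfv, eval_add, eval_mul, eval_fPoly, hfv, zero_mul, zero_add] at h2
    exact h2.symm
  obtain ⟨Qtop, hQtop⟩ := homog_div (Tpoly_homog p i) (hQA i)
  set Ai := homogeneousComponent i (Alow i) with hAi
  have hAisupp : ∀ d : Fin 3 →₀ ℕ, coeff d Ai ≠ 0 → d.degree = i ∧ d 0 ≤ 2 := by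
    intro d hd
    rw [hAi, coeff_homogeneousComponent] at hd
    by_cases hdd : d.degree = i
    · refine ⟨hdd, ?_⟩
      rw [if_pos hdd] at hd
      exact le_trans (monomial_le_degreeOf 0 (mem_support_iff.mpr hd)) (hAdeg i)
    · rw [if_neg hdd] at hd
      exact absurd rfl hd
  set c : Fin (3 * i) → ℂ := fun k => coeff (eIdx i k) Ai with hc
  have hrep := basisRep hi Ai hAisupp
  have hsumfun : ∀ w : Fin 3 → ℂ,
      (∑ k : Fin (3 * i), c k • bFun i k) w = eval w Ai := by
    intro w
    rw [Finset.sum_apply]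
    conv_rhs => rw [hrep]
    rw [map_sum]
    refine Finset.sum_congr rfl fun k _ => ?_
    rw [Pi.smul_apply, smul_eq_mul, eval_monomial_gen]
    rfl
  -- Step 3: the normalized germ lies one step deeper in the filtration
  have hpsum : ∀ w : Fin 3 → ℂ, fT w = 0 → p.partialSum (i + 1) w = eval w Ai := by
    intro w hw
    rw [partialSum_eq, Finset.sum_range_succ]
    have hlow : ∀ j ∈ Finset.range i, eval w (Tpoly p j) = 0 := by
      intro j hj
      have h5 := hQA j
      rw [hAlow0 j (Finset.mem_range.mp hj), add_zero] at h5
      rw [h5, eval_mul, eval_fPoly, hw, zero_mul]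
    rw [Finset.sum_eq_zero hlow, zero_add]
    have h6 := congrArg (MvPolynomial.eval w) hQtop
    rw [eval_add, eval_mul, eval_fPoly, hw, zero_mul, zero_add] at h6
    exact h6
  have hG : (g - ∑ k : Fin (3 * i), c k • bFun i k) ∈ arcFiltration 3 fT (i + 1) := by
    refine mem_arcFiltration_of (R := fun w => g w - p.partialSum (i + 1) w) ?_ ?_ ?_
    · have hfun : (∑ k : Fin (3 * i), c k • bFun i k) = fun w => eval w Ai :=
        funext hsumfun
      rw [hfun]
      exact hga.sub (analyticAt_eval _ _)
    · simpa using hp.isBigO_sub_partialSum_pow (i + 1)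
    · intro w hw
      rw [Pi.sub_apply, hsumfun w]
      show g w - (MvPolynomial.eval w) Ai = g w - p.partialSum (i + 1) w
      rw [hpsum w hw]
  refine ⟨c, hG, ?_⟩
  -- Step 4: uniqueness of the coefficients
  intro c' hc'
  have key : ∀ v : Fin 3 → ℂ, fT v = 0 →
      (∑ k : Fin (3 * i), (c' k - c k) * bFun i k v) = 0 := by
    intro v hv
    set G := g - ∑ k : Fin (3 * i), c k • bFun i k with hGdef
    set G' := g - ∑ k : Fin (3 * i), c' k • bFun i k with hG'def
    have h8 : vArc 3 fT G ≤ ord (G ∘ (lineArc v hv).toFun) := iInf_le _ (lineArc v hv)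
    have h8' : vArc 3 fT G' ≤ ord (G' ∘ (lineArc v hv).toFun) := iInf_le _ (lineArc v hv)
    have hordG : ((i + 1 : ℕ) : ℕ∞) ≤ ord (G ∘ (lineArc v hv).toFun) :=
      le_trans (by exact_mod_cast hG.2) h8
    have hordG' : ((i + 1 : ℕ) : ℕ∞) ≤ ord (G' ∘ (lineArc v hv).toFun) :=
      le_trans (by exact_mod_cast hc'.2) h8'
    have hGA : AnalyticAt ℂ (G ∘ (lineArc v hv).toFun) 0 := by
      have h0 : AnalyticAt ℂ G ((lineArc v hv).toFun 0) := by
        rw [(lineArc v hv).map_zero]; exact hG.1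
      exact h0.comp (lineArc v hv).analyticAt
    have hG'A : AnalyticAt ℂ (G' ∘ (lineArc v hv).toFun) 0 := by
      have h0 : AnalyticAt ℂ G' ((lineArc v hv).toFun 0) := by
        rw [(lineArc v hv).map_zero]; exact hc'.1
      exact h0.comp (lineArc v hv).analyticAt
    have hO := (isBigO_of_le_ord hGA hordG).sub (isBigO_of_le_ord hG'A hordG')
    have hdiff : (fun τ : ℂ => τ ^ i * ∑ k : Fin (3 * i), (c' k - c k) * bFun i k v)
        =O[𝓝 0] fun τ => ‖τ‖ ^ (i + 1) := by
      refine hO.congr_left fun τ => ?_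
      show G (τ • v) - G' (τ • v) = _
      rw [hGdef, hG'def]
      simp only [Pi.sub_apply, Finset.sum_apply, Pi.smul_apply, smul_eq_mul]
      have hmain : ∀ a A B : ℂ, (a - A) - (a - B) = B - A := by intros; ring
      rw [hmain, Finset.mul_sum, ← Finset.sum_sub_distrib]
      refine Finset.sum_congr rfl fun k _ => ?_
      rw [bFun_smul k.isLt]
      ring
    exact const_eq_zero_of_isBigO hdiff
  have hpoly : (∑ k : Fin (3 * i), monomial (eIdx i k) (c' k - c k))
      = (0 : MvPolynomial (Fin 3) ℂ) := by
    apply poly_eq_zero_of_vanish _ (degreeOf_sum_monomial _)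
    intro v hv
    rw [map_sum]
    rw [Finset.sum_congr rfl fun (k : Fin (3 * i)) _ => eval_monomial_gen v (eIdx i (k:ℕ)) (c' k - c k)]
    exact key v hv
  funext k
  have h7 := coeff_sum_monomial_eIdx (fun k => c' k - c k) k
  rw [hpoly] at h7
  simp only [coeff_zero] at h7
  exact sub_eq_zero.mp h7.symm

/-! #### The rational form of the Poincaré series -/

lemma ps_step (u : ℕ → ℤ) :
    (PowerSeries.mk u) * (1 - PowerSeries.X) =
      PowerSeries.mk (fun n => u n - if n = 0 then 0 else u (n - 1)) := by
  ext n
  rw [mul_sub, mul_one, map_sub, PowerSeries.coeff_mk]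
  rcases n with _ | n
  · rw [PowerSeries.coeff_zero_mul_X, PowerSeries.coeff_mk]
    simp
  · rw [PowerSeries.coeff_succ_mul_X, PowerSeries.coeff_mk, PowerSeries.coeff_mk]
    simp

lemma ps_identity :
    (PowerSeries.mk fun i => ((if i = 0 then 1 else 3 * i : ℕ) : ℤ)) *
        (1 - PowerSeries.X) ^ 3 = 1 - PowerSeries.X ^ 3 := by
  have h1 : (PowerSeries.mk fun i => ((if i = 0 then 1 else 3 * i : ℕ) : ℤ)) *
      (1 - PowerSeries.X)
      = PowerSeries.mk (fun n => if n = 0 then 1 else if n = 1 then 2 else 3) := by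
    rw [ps_step]
    refine congrArg PowerSeries.mk (funext fun n => ?_)
    rcases n with _ | n
    · norm_num
    · rcases n with _ | n
      · norm_num
      · simp only [Nat.succ_ne_zero, if_false, Nat.add_sub_cancel]
        push_cast
        ring
  have h2 : PowerSeries.mk (fun n => if n = 0 then 1 else if n = 1 then 2 else (3:ℤ)) *
      (1 - PowerSeries.X)
      = PowerSeries.mk (fun n => if n ≤ 2 then 1 else 0) := by
    rw [ps_step]
    refine congrArg PowerSeries.mk (funext fun n => ?_)
    split_ifs <;> omega
  have h3 : PowerSeries.mk (fun n => if n ≤ 2 then 1 else (0:ℤ)) * (1 - PowerSeries.X)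
      = 1 - PowerSeries.X ^ 3 := by
    rw [ps_step]
    ext n
    rw [PowerSeries.coeff_mk, map_sub, PowerSeries.coeff_one, PowerSeries.coeff_X_pow]
    split_ifs <;> omega
  calc (PowerSeries.mk fun i => ((if i = 0 then 1 else 3 * i : ℕ) : ℤ)) *
        (1 - PowerSeries.X) ^ 3
      = (((PowerSeries.mk fun i => ((if i = 0 then 1 else 3 * i : ℕ) : ℤ)) *
          (1 - PowerSeries.X)) * (1 - PowerSeries.X)) * (1 - PowerSeries.X) := by ring
    _ = 1 - PowerSeries.X ^ 3 := by rw [h1, h2, h3]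

end AuxT333

/-- For the parabolic surface singularity `T_{3,3,3}` (= `P₈`),
i.e. `(V,0) ⊆ (ℂ³,0)` defined by `x³ + y³ + z³ = 0`, the Poincaré series of the arc
filtration is `P_{V,0}(t) = (1 - t³)/(1 - t)³`; equivalently
`dim_ℂ (F₀/F₁) = 1` and `dim_ℂ (F_i/F_{i+1}) = 3i` for `i ≥ 1`. -/
theorem poincare_series_T333 :
    ∃ dimF : ℕ → ℕ,
      (∀ i, dimQuotEq
        (arcFiltration 3 (fun w : Fin 3 → ℂ => w 0 ^ 3 + w 1 ^ 3 + w 2 ^ 3)) i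
        (dimF i)) ∧
      (PowerSeries.mk fun i => (dimF i : ℤ)) * (1 - PowerSeries.X) ^ 3
        = 1 - PowerSeries.X ^ 3 ∧
      dimF 0 = 1 ∧ ∀ i, 1 ≤ i → dimF i = 3 * i := by
  refine ⟨fun i => if i = 0 then 1 else 3 * i, fun i => ?_, ps_identity, by norm_num,
    fun i hi => by simp [Nat.one_le_iff_ne_zero.mp hi]⟩
  rcases Nat.eq_zero_or_pos i with rfl | hi
  · have h0 : dimQuotEq (arcFiltration 3 (fun w : Fin 3 → ℂ => w 0 ^ 3 + w 1 ^ 3 + w 2 ^ 3)) 0 1 :=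
      dimQuot_zero
    simpa using h0
  · have h := dimQuot_pos i hi
    show dimQuotEq _ i (if i = 0 then 1 else 3 * i)
    rw [if_neg (by omega : ¬ i = 0)]
    exact h
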